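/- arXiv:2304.03878 — 2 statements merged into one kernel-verified Lean document; each statement's English description precedes it below -/
import Mathlib

section
/- For every α > 0 there exists a constant C_α ∈ (0,∞) such that for every p ∈ [1,∞), every probability space (Ω,μ) and all bounded measurable functions F, G : Ω → ℂ, ‖FG‖_{L_{p/2}} ≤ C_α ‖F‖_{L_p(log L)^α} ‖G‖_{L_p(log L)^{−α}}, where ‖H‖_{L_{p/2}} = (∫ |H|^{p/2} dμ)^{2/p}. -/
noncomputable section

open Finset MeasureTheory

universe u

/-- The Orlicz function `ψ(t) = t^p log^α (e + t^p)`. -/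
def psi (p α t : ℝ) : ℝ := t ^ p * Real.log (Real.exp 1 + t ^ p) ^ α

/-- The Orlicz norm `‖f‖_{L_p(log L)^α(E)}` with respect to a measure `μ`. -/
def orliczMeas {Ω : Type*} [MeasurableSpace Ω] (μ : Measure Ω)
    {E : Type*} [NormedAddCommGroup E] (p α : ℝ) (f : Ω → E) : ℝ :=
  sInf {γ : ℝ | 0 < γ ∧ ∫ x, psi p α (‖f x‖ / γ) ∂μ ≤ 1}

namespace Stmt17Aux

lemma one_le_logE {x : ℝ} (hx : 0 ≤ x) : 1 ≤ Real.log (Real.exp 1 + x) := by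
  calc (1:ℝ) = Real.log (Real.exp 1) := (Real.log_exp 1).symm
  _ ≤ _ := Real.log_le_log (Real.exp_pos 1) (by linarith)

lemma log_growth {α : ℝ} (hα : 0 < α) {u v : ℝ} (hu : 0 ≤ u) (hv : 0 ≤ v)
    (h : v ≤ u * Real.log (Real.exp 1 + v) ^ (2*α)) :
    Real.log (Real.exp 1 + v) ≤ (4*α+1)^2 * Real.log (Real.exp 1 + u) := by
  set Lv := Real.log (Real.exp 1 + v) with hLv
  set Lu := Real.log (Real.exp 1 + u) with hLu
  have hLv1 : 1 ≤ Lv := one_le_logE hv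
  have hLu1 : 1 ≤ Lu := one_le_logE hu
  have hpow1 : 1 ≤ Lv ^ (2*α) := Real.one_le_rpow hLv1 (by linarith)
  have step1 : Lv ≤ Lu + 2*α * Real.log Lv := by
    have h1 : Real.exp 1 + v ≤ (Real.exp 1 + u) * Lv ^ (2*α) := by
      have : Real.exp 1 * 1 ≤ Real.exp 1 * Lv ^ (2*α) :=
        mul_le_mul_of_nonneg_left hpow1 (Real.exp_pos 1).le
      calc Real.exp 1 + v ≤ Real.exp 1 + u * Lv ^ (2*α) := by linarith
      _ ≤ (Real.exp 1 + u) * Lv ^ (2*α) := by rw [add_mul]; nlinarith [hu, hpow1]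
    have h2 : Lv ≤ Real.log ((Real.exp 1 + u) * Lv ^ (2*α)) :=
      Real.log_le_log (by positivity) h1
    rwa [Real.log_mul (by positivity) (by positivity),
      Real.log_rpow (by linarith : (0:ℝ) < Lv)] at h2
  have step2 : Real.log Lv ≤ 2 * Real.sqrt Lv := by
    have h3 : Real.log (Real.sqrt Lv) ≤ Real.sqrt Lv - 1 :=
      Real.log_le_sub_one_of_pos (Real.sqrt_pos.mpr (by linarith))
    have h4 : Real.log (Real.sqrt Lv) = Real.log Lv / 2 := Real.log_sqrt (by linarith)
    nlinarith [Real.sqrt_nonneg Lv]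
  have hs : Real.sqrt Lv ^ 2 = Lv := Real.sq_sqrt (by linarith)
  have ht : Real.sqrt Lu ^ 2 = Lu := Real.sq_sqrt (by linarith)
  have hs0 : 0 ≤ Real.sqrt Lv := Real.sqrt_nonneg _
  have ht1 : 1 ≤ Real.sqrt Lu := by
    rw [show (1:ℝ) = Real.sqrt 1 by simp]; exact Real.sqrt_le_sqrt hLu1
  set s := Real.sqrt Lv
  set t := Real.sqrt Lu
  have key : s^2 ≤ t^2 + 4*α*s := by nlinarith
  have hst : s ≤ (4*α+1)*t := by
    by_contra hc
    push_neg at hc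
    have htle : 4*α + t ≤ (4*α+1)*t := by nlinarith
    have h5 : t * t < s * (s - 4*α) :=
      mul_lt_mul'' (by linarith) (by linarith) (by linarith) (by linarith)
    nlinarith
  calc Lv = s^2 := hs.symm
  _ ≤ ((4*α+1)*t)^2 := by nlinarith
  _ = (4*α+1)^2 * Lu := by rw [mul_pow, ht]

lemma pointwise_orlicz {α : ℝ} (hα : 0 < α) {u v : ℝ} (hu : 0 ≤ u) (hv : 0 ≤ v) :
    Real.sqrt (u * v) ≤ (((4*α+1)^2 : ℝ) ^ α) *
      (u * Real.log (Real.exp 1 + u) ^ α + v * Real.log (Real.exp 1 + v) ^ (-α)) := by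
  set K : ℝ := ((4*α+1)^2 : ℝ) ^ α with hK
  have hK1 : 1 ≤ K := Real.one_le_rpow (by nlinarith) hα.le
  set Lu := Real.log (Real.exp 1 + u) with hLu
  set Lv := Real.log (Real.exp 1 + v) with hLv
  have hLu1 : 1 ≤ Lu := one_le_logE hu
  have hLv1 : 1 ≤ Lv := one_le_logE hv
  have hLu0 : (0:ℝ) < Lu := by linarith
  have hLv0 : (0:ℝ) < Lv := by linarith
  have term1 : 0 ≤ u * Lu ^ α := by positivity
  have term2 : 0 ≤ v * Lv ^ (-α) := by positivity
  by_cases h : v ≤ u * Lv ^ (2*α)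
  · have h1 : u * v ≤ (u * Lv ^ α)^2 := by
      have : (u * Lv ^ α)^2 = u * (u * Lv ^ (2*α)) := by
        rw [mul_pow, ← Real.rpow_natCast (Lv ^ α) 2, ← Real.rpow_mul hLv0.le]
        push_cast
        ring_nf
      rw [this]
      exact mul_le_mul_of_nonneg_left h hu
    have h2 : Real.sqrt (u * v) ≤ u * Lv ^ α := by
      calc Real.sqrt (u*v) ≤ Real.sqrt ((u * Lv ^ α)^2) := Real.sqrt_le_sqrt h1
      _ = u * Lv ^ α := Real.sqrt_sq (by positivity)
    have h3 : Lv ^ α ≤ K * Lu ^ α := by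
      calc Lv ^ α ≤ ((4*α+1)^2 * Lu) ^ α :=
            Real.rpow_le_rpow hLv0.le (log_growth hα hu hv h) hα.le
      _ = K * Lu ^ α := Real.mul_rpow (by positivity) hLu0.le
    calc Real.sqrt (u*v) ≤ u * (K * Lu ^ α) := h2.trans (mul_le_mul_of_nonneg_left h3 hu)
    _ = K * (u * Lu ^ α) := by ring
    _ ≤ K * (u * Lu ^ α + v * Lv ^ (-α)) := by nlinarith
  · push_neg at h
    have h1 : u * v ≤ (v * Lv ^ (-α))^2 := by
      have e1 : (v * Lv ^ (-α))^2 = (v * Lv ^ (-(2*α))) * v := by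
        rw [mul_pow, ← Real.rpow_natCast (Lv ^ (-α)) 2, ← Real.rpow_mul hLv0.le]
        push_cast
        ring_nf
      have e2 : u ≤ v * Lv ^ (-(2*α)) := by
        rw [Real.rpow_neg hLv0.le, mul_comm, inv_mul_eq_div, le_div_iff₀ (by positivity)]
        nlinarith
      rw [e1]
      exact mul_le_mul_of_nonneg_right e2 hv
    have h2 : Real.sqrt (u * v) ≤ v * Lv ^ (-α) := by
      calc Real.sqrt (u*v) ≤ Real.sqrt ((v * Lv ^ (-α))^2) := Real.sqrt_le_sqrt h1
      _ = v * Lv ^ (-α) := Real.sqrt_sq (by positivity)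
    nlinarith

lemma psi_nonneg {p α t : ℝ} (ht : 0 ≤ t) : 0 ≤ psi p α t := by
  unfold psi
  have h1 : (0:ℝ) ≤ t ^ p := Real.rpow_nonneg ht p
  have h2 : (0:ℝ) < Real.log (Real.exp 1 + t ^ p) := lt_of_lt_of_le one_pos (one_le_logE h1)
  positivity

lemma psi_le_bound {p α t T : ℝ} (hp : 0 ≤ p) (ht : 0 ≤ t) (htT : t ≤ T) :
    psi p α t ≤ T ^ p * max (Real.log (Real.exp 1 + T ^ p) ^ α) 1 := by
  unfold psi
  have hT : 0 ≤ T := ht.trans htT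
  have h1 : t ^ p ≤ T ^ p := Real.rpow_le_rpow ht htT hp
  have h1' : (0:ℝ) ≤ t ^ p := Real.rpow_nonneg ht p
  have h2 : 1 ≤ Real.log (Real.exp 1 + t ^ p) := one_le_logE h1'
  have h3 : Real.log (Real.exp 1 + t ^ p) ^ α ≤ max (Real.log (Real.exp 1 + T ^ p) ^ α) 1 := by
    rcases le_or_gt 0 α with hα | hα
    · exact le_max_of_le_left (Real.rpow_le_rpow (by linarith) (by
        exact Real.log_le_log (by positivity) (by linarith)) hα)
    · exact le_max_of_le_right (Real.rpow_le_one_of_one_le_of_nonpos h2 hα.le)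
  exact mul_le_mul h1 h3 (by positivity) (by positivity)

lemma psi_measurable {Ω : Type*} [MeasurableSpace Ω] {f : Ω → ℂ}
    (hf : StronglyMeasurable f) (p α γ : ℝ) :
    Measurable (fun x => psi p α (‖f x‖ / γ)) := by
  have h1 : Measurable (fun x => ‖f x‖ / γ) := hf.norm.measurable.div_const γ
  have h2 : Measurable (fun x => (‖f x‖ / γ) ^ p) := h1.pow measurable_const
  exact h2.mul ((Real.measurable_log.comp (measurable_const.add h2)).pow measurable_const)

lemma psi_integrable {Ω : Type*} [MeasurableSpace Ω] (μ : Measure Ω) [IsFiniteMeasure μ]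
    {f : Ω → ℂ} (hf : StronglyMeasurable f) {M : ℝ} (hM : ∀ x, ‖f x‖ ≤ M)
    {p : ℝ} (hp : 0 ≤ p) (α : ℝ) {γ : ℝ} (hγ : 0 < γ) :
    Integrable (fun x => psi p α (‖f x‖ / γ)) μ := by
  set T : ℝ := max M 0 / γ with hT
  set B : ℝ := T ^ p * max (Real.log (Real.exp 1 + T ^ p) ^ α) 1 with hB
  refine Integrable.mono' (integrable_const B) (psi_measurable hf p α γ).aestronglyMeasurable
    (Filter.Eventually.of_forall fun x => ?_)
  have ht : 0 ≤ ‖f x‖ / γ := by positivity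
  rw [Real.norm_eq_abs, abs_of_nonneg (psi_nonneg ht)]
  exact psi_le_bound hp ht ((div_le_div_iff_of_pos_right hγ).mpr ((hM x).trans (le_max_left _ _)))

lemma mem_orlicz_set {Ω : Type*} [MeasurableSpace Ω] (μ : Measure Ω) [IsProbabilityMeasure μ]
    {f : Ω → ℂ} (hf : StronglyMeasurable f) {M : ℝ} (hM : ∀ x, ‖f x‖ ≤ M)
    {p : ℝ} (hp : 1 ≤ p) (β : ℝ) :
    ∃ γ : ℝ, 0 < γ ∧ ∫ x, psi p β (‖f x‖ / γ) ∂μ ≤ 1 := by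
  set c : ℝ := max (Real.log (Real.exp 1 + 1) ^ β) 1 with hc
  have hc1 : 1 ≤ c := le_max_right _ _
  set γ : ℝ := (max M 0 + 1) * c with hγdef
  have hM1 : 0 < max M 0 + 1 := by positivity
  have hγ : 0 < γ := by positivity
  refine ⟨γ, hγ, ?_⟩
  have ptwise : ∀ x, psi p β (‖f x‖ / γ) ≤ 1 := by
    intro x
    set t : ℝ := ‖f x‖ / γ with htdef
    have ht0 : 0 ≤ t := by positivity
    have htc : t * c ≤ 1 := by
      rw [htdef, hγdef, div_mul_eq_mul_div, div_le_one (by positivity)]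
      have h1 : ‖f x‖ ≤ max M 0 + 1 := ((hM x).trans (le_max_left _ _)).trans (by linarith)
      nlinarith [norm_nonneg (f x)]
    have ht1 : t ≤ 1 := by nlinarith
    rcases eq_or_lt_of_le ht0 with h0 | h0
    · rw [show psi p β t = 0 by
        rw [← h0]; unfold psi; rw [Real.zero_rpow (by linarith : p ≠ 0), zero_mul]]
      norm_num
    · have htp : t ^ p ≤ t := by
        calc t ^ p ≤ t ^ (1:ℝ) := Real.rpow_le_rpow_of_exponent_ge h0 ht1 hp
        _ = t := Real.rpow_one t
      have htp0 : 0 ≤ t ^ p := Real.rpow_nonneg ht0 p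
      have hlog : Real.log (Real.exp 1 + t ^ p) ^ β ≤ c := by
        rcases le_or_gt 0 β with hβ | hβ
        · refine le_max_of_le_left (Real.rpow_le_rpow ?_ ?_ hβ)
          · linarith [one_le_logE htp0]
          · exact Real.log_le_log (by positivity) (by nlinarith)
        · exact le_max_of_le_right
            (Real.rpow_le_one_of_one_le_of_nonpos (one_le_logE htp0) hβ.le)
      have hlog0 : 0 ≤ Real.log (Real.exp 1 + t ^ p) ^ β := by
        have := one_le_logE htp0; positivity
      calc psi p β t = t ^ p * Real.log (Real.exp 1 + t ^ p) ^ β := rfl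
      _ ≤ t * c := mul_le_mul htp hlog hlog0 ht0
      _ ≤ 1 := htc
  calc ∫ x, psi p β (‖f x‖ / γ) ∂μ ≤ ∫ _x, (1:ℝ) ∂μ :=
        integral_mono (psi_integrable μ hf hM (by linarith) β hγ) (integrable_const 1)
          fun x => ptwise x
  _ = 1 := by simp

end Stmt17Aux

open Stmt17Aux

/-- **Hölder's inequality (5.19) for Orlicz spaces**:
`‖FG‖_{L_{p/2}} ≤ C_α ‖F‖_{L_p(log L)^α} ‖G‖_{L_p(log L)^{-α}}`. -/
theorem stmt17 (α : ℝ) (hα : 0 < α) :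
    ∃ C : ℝ, 0 < C ∧ ∀ (p : ℝ), 1 ≤ p →
      ∀ (Ω : Type u) (mΩ : MeasurableSpace Ω) (μ : Measure Ω), IsProbabilityMeasure μ →
      ∀ (F G : Ω → ℂ), StronglyMeasurable F → (∃ M, ∀ x, ‖F x‖ ≤ M) →
        StronglyMeasurable G → (∃ M, ∀ x, ‖G x‖ ≤ M) →
        (∫ x, ‖F x * G x‖ ^ (p / 2) ∂μ) ^ (2 / p) ≤
          C * orliczMeas μ p α F * orliczMeas μ p (-α) G := by
  set K : ℝ := ((4*α+1)^2 : ℝ) ^ α with hKdef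
  have hK1 : 1 ≤ K := Real.one_le_rpow (by nlinarith) hα.le
  have hK0 : 0 < K := by linarith
  refine ⟨(K*2) ^ (2:ℝ), Real.rpow_pos_of_pos (by linarith) _, ?_⟩
  set C : ℝ := (K*2) ^ (2:ℝ) with hCdef
  have hC0 : 0 < C := Real.rpow_pos_of_pos (by linarith) _
  intro p hp Ω mΩ μ hμ F G hF ⟨MF, hMF⟩ hG ⟨MG, hMG⟩
  have hp0 : (0:ℝ) < p := by linarith
  set SF : Set ℝ := {γ : ℝ | 0 < γ ∧ ∫ x, psi p α (‖F x‖ / γ) ∂μ ≤ 1} with hSF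
  set SG : Set ℝ := {γ : ℝ | 0 < γ ∧ ∫ x, psi p (-α) (‖G x‖ / γ) ∂μ ≤ 1} with hSG
  have hSFne : SF.Nonempty := mem_orlicz_set μ hF hMF hp α
  have hSGne : SG.Nonempty := mem_orlicz_set μ hG hMG hp (-α)
  set L : ℝ := (∫ x, ‖F x * G x‖ ^ (p / 2) ∂μ) ^ (2 / p) with hLdef
  have hL0 : 0 ≤ L :=
    Real.rpow_nonneg (integral_nonneg fun x => Real.rpow_nonneg (norm_nonneg _) _) _
  -- core estimate
  have core : ∀ γF ∈ SF, ∀ γG ∈ SG, L ≤ C * γF * γG := by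
    rintro γF ⟨hγF, hintF⟩ γG ⟨hγG, hintG⟩
    have hγFG : (0:ℝ) < γF * γG := mul_pos hγF hγG
    have ptwise : ∀ x, ‖F x * G x‖ ^ (p/2) ≤
        (γF*γG) ^ (p/2) * (K * (psi p α (‖F x‖/γF) + psi p (-α) (‖G x‖/γG))) := by
      intro x
      set a : ℝ := ‖F x‖/γF with ha
      set b : ℝ := ‖G x‖/γG with hb
      have ha0 : 0 ≤ a := by positivity
      have hb0 : 0 ≤ b := by positivity
      have key := pointwise_orlicz hα (Real.rpow_nonneg ha0 p) (Real.rpow_nonneg hb0 p)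
      have e1 : Real.sqrt (a ^ p * b ^ p) = (a*b) ^ (p/2) := by
        rw [← Real.mul_rpow ha0 hb0, Real.sqrt_eq_rpow,
          ← Real.rpow_mul (mul_nonneg ha0 hb0)]
        congr 1
        ring
      have e2 : (a*b) ^ (p/2) = ‖F x * G x‖ ^ (p/2) / (γF*γG) ^ (p/2) := by
        rw [ha, hb, div_mul_div_comm, ← norm_mul, Real.div_rpow (norm_nonneg _) hγFG.le]
      have e3 : ‖F x * G x‖ ^ (p/2) = (γF*γG) ^ (p/2) * Real.sqrt (a ^ p * b ^ p) := by
        rw [e1, e2, mul_div_assoc']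
        field_simp
      rw [e3]
      have hpos : (0:ℝ) ≤ (γF*γG) ^ (p/2) := Real.rpow_nonneg hγFG.le _
      exact mul_le_mul_of_nonneg_left (by
        calc Real.sqrt (a ^ p * b ^ p) ≤
            K * (a ^ p * Real.log (Real.exp 1 + a ^ p) ^ α
              + b ^ p * Real.log (Real.exp 1 + b ^ p) ^ (-α)) := key
        _ = K * (psi p α a + psi p (-α) b) := rfl) hpos
    have hintFI : Integrable (fun x => psi p α (‖F x‖/γF)) μ :=
      psi_integrable μ hF hMF (by linarith) α hγF
    have hintGI : Integrable (fun x => psi p (-α) (‖G x‖/γG)) μ :=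
      psi_integrable μ hG hMG (by linarith) (-α) hγG
    have hgI : Integrable (fun x =>
        (γF*γG) ^ (p/2) * (K * (psi p α (‖F x‖/γF) + psi p (-α) (‖G x‖/γG)))) μ :=
      ((hintFI.add hintGI).const_mul K).const_mul _
    have int_le : (∫ x, ‖F x * G x‖ ^ (p/2) ∂μ) ≤ (γF*γG) ^ (p/2) * (K * 2) := by
      calc (∫ x, ‖F x * G x‖ ^ (p/2) ∂μ) ≤ ∫ x,
            (γF*γG) ^ (p/2) * (K * (psi p α (‖F x‖/γF) + psi p (-α) (‖G x‖/γG))) ∂μ :=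
          integral_mono_of_nonneg
            (Filter.Eventually.of_forall fun x => Real.rpow_nonneg (norm_nonneg _) _)
            hgI (Filter.Eventually.of_forall ptwise)
      _ = (γF*γG) ^ (p/2) * (K * ((∫ x, psi p α (‖F x‖/γF) ∂μ)
            + ∫ x, psi p (-α) (‖G x‖/γG) ∂μ)) := by
          rw [integral_const_mul, integral_const_mul, integral_add hintFI hintGI]
      _ ≤ (γF*γG) ^ (p/2) * (K * 2) := by
          have h1 : (0:ℝ) ≤ (γF*γG) ^ (p/2) := Real.rpow_nonneg hγFG.le _
          have h2 : (∫ x, psi p α (‖F x‖/γF) ∂μ) + ∫ x, psi p (-α) (‖G x‖/γG) ∂μ ≤ 2 := by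
            linarith
          exact mul_le_mul_of_nonneg_left (mul_le_mul_of_nonneg_left h2 hK0.le) h1
    have rpow_le : L ≤ ((γF*γG) ^ (p/2) * (K * 2)) ^ (2/p) := by
      rw [hLdef]
      exact Real.rpow_le_rpow
        (integral_nonneg fun x => Real.rpow_nonneg (norm_nonneg _) _) int_le
        (by positivity)
    have expand : ((γF*γG) ^ (p/2) * (K * 2)) ^ (2/p) ≤ C * γF * γG := by
      have e : ((γF*γG) ^ (p/2)) ^ (2/p) = γF*γG := by
        rw [← Real.rpow_mul hγFG.le,
          show p/2*(2/p) = 1 by field_simp, Real.rpow_one]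
      have e2 : (K*2) ^ (2/p) ≤ C := by
        rw [hCdef]
        exact Real.rpow_le_rpow_of_exponent_le (by linarith)
          (by rw [div_le_iff₀ hp0]; nlinarith)
      calc ((γF*γG) ^ (p/2) * (K * 2)) ^ (2/p)
          = ((γF*γG) ^ (p/2)) ^ (2/p) * (K*2) ^ (2/p) :=
            Real.mul_rpow (Real.rpow_nonneg hγFG.le _) (by linarith)
      _ = (γF*γG) * (K*2) ^ (2/p) := by rw [e]
      _ ≤ (γF*γG) * C := mul_le_mul_of_nonneg_left e2 hγFG.le
      _ = C * γF * γG := by ring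
    exact rpow_le.trans expand
  -- infimum manipulation
  have ha0 : (0:ℝ) ≤ sInf SF := le_csInf hSFne fun γ hγ => hγ.1.le
  have hb0 : (0:ℝ) ≤ sInf SG := le_csInf hSGne fun γ hγ => hγ.1.le
  have step1 : ∀ γF ∈ SF, L ≤ C * γF * sInf SG := by
    intro γF hγF
    have hCγF : 0 < C * γF := mul_pos hC0 hγF.1
    have : L / (C * γF) ≤ sInf SG := by
      refine le_csInf hSGne fun γG hγG => ?_
      rw [div_le_iff₀ hCγF]
      calc L ≤ C * γF * γG := core γF hγF γG hγG
      _ = γG * (C * γF) := by ring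
    calc L = L / (C * γF) * (C * γF) := (div_mul_cancel₀ L hCγF.ne').symm
    _ ≤ sInf SG * (C * γF) := mul_le_mul_of_nonneg_right this hCγF.le
    _ = C * γF * sInf SG := by ring
  show L ≤ C * sInf SF * sInf SG
  rcases eq_or_lt_of_le hb0 with hb | hb
  · obtain ⟨γF, hγF⟩ := hSFne
    have := step1 γF hγF
    rw [← hb] at this ⊢
    simpa using this
  · have hCb : 0 < C * sInf SG := mul_pos hC0 hb
    have : L / (C * sInf SG) ≤ sInf SF := by
      refine le_csInf hSFne fun γF hγF => ?_
      rw [div_le_iff₀ hCb]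
      calc L ≤ C * γF * sInf SG := step1 γF hγF
      _ = γF * (C * sInf SG) := by ring
    calc L = L / (C * sInf SG) * (C * sInf SG) := by field_simp
    _ ≤ sInf SF * (C * sInf SG) := mul_le_mul_of_nonneg_right this hCb.le
    _ = C * sInf SF * sInf SG := by ring
end
end

section
/- For every p ∈ [1,∞) and α > 0 there exists a constant c_{p,α} ∈ (0,∞) such that for every probability space (Ω,μ), every normed space (E,‖·‖_E) and every bounded measurable function f : Ω → E that is not almost everywhere zero, ‖f‖_{L_p(log L)^α(E)} ≥ c_{p,α} ‖f‖_{L_p(E)} (1 + log^{α/p}(‖f‖_{L_p(E)} / ‖f‖_{L_1(E)})). -/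
noncomputable section

open Finset MeasureTheory

universe u v

lemma one_le_log_aux {x : ℝ} (hx : 0 ≤ x) : 1 ≤ Real.log (Real.exp 1 + x) := by
  calc (1:ℝ) = Real.log (Real.exp 1) := (Real.log_exp 1).symm
  _ ≤ _ := Real.log_le_log (Real.exp_pos 1) (by linarith)

lemma psi_nonneg {p α t : ℝ} (ht : 0 ≤ t) : 0 ≤ psi p α t := by
  have h1 : (0:ℝ) ≤ t ^ p := Real.rpow_nonneg ht p
  have h2 : (0:ℝ) ≤ Real.log (Real.exp 1 + t ^ p) := le_trans zero_le_one (one_le_log_aux h1)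
  exact mul_nonneg h1 (Real.rpow_nonneg h2 α)

lemma psi_mono {p α : ℝ} (hp : 0 ≤ p) (hα : 0 ≤ α) {t u : ℝ} (ht : 0 ≤ t) (h : t ≤ u) :
    psi p α t ≤ psi p α u := by
  have h1 : t ^ p ≤ u ^ p := Real.rpow_le_rpow ht h hp
  have h2 : (0:ℝ) ≤ t ^ p := Real.rpow_nonneg ht p
  have h3 : Real.log (Real.exp 1 + t ^ p) ≤ Real.log (Real.exp 1 + u ^ p) :=
    Real.log_le_log (lt_of_lt_of_le (Real.exp_pos 1) (by linarith)) (by linarith)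
  have h4 : (0:ℝ) ≤ Real.log (Real.exp 1 + t ^ p) := le_trans zero_le_one (one_le_log_aux h2)
  have h5 : (0:ℝ) ≤ u ^ p := Real.rpow_nonneg (le_trans ht h) p
  exact mul_le_mul h1 (Real.rpow_le_rpow h4 h3 hα) (Real.rpow_nonneg h4 α) (by positivity)

lemma rpow_le_psi {p α t : ℝ} (hα : 0 ≤ α) (ht : 0 ≤ t) : t ^ p ≤ psi p α t := by
  have h2 : (0:ℝ) ≤ t ^ p := Real.rpow_nonneg ht p
  exact le_mul_of_one_le_right h2 (Real.one_le_rpow (one_le_log_aux h2) hα)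

open Filter in
lemma eventually_aux (a C : ℝ) {b : ℝ} (hb : 0 < b) :
    ∃ s0 : ℝ, 1 ≤ s0 ∧ ∀ s, s0 ≤ s → a * Real.log s + C ≤ b * s := by
  have h1 : ∀ᶠ s : ℝ in atTop, a * Real.log s ≤ (b/2) * s := by
    have h := (Real.isLittleO_log_id_atTop.const_mul_left a).def (c := b/2) (by positivity)
    filter_upwards [h, eventually_ge_atTop (0:ℝ)] with s hs hs0
    calc a * Real.log s ≤ ‖a * Real.log s‖ := le_abs_self _
    _ ≤ b/2 * ‖id s‖ := hs
    _ = b/2 * s := by rw [id, Real.norm_of_nonneg hs0]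
  have h2 : ∀ᶠ s : ℝ in atTop, C ≤ (b/2) * s := by
    filter_upwards [eventually_ge_atTop (2*C/b)] with s hs
    rw [div_le_iff₀ hb, mul_comm] at hs
    linarith
  have h3 : ∀ᶠ s : ℝ in atTop, a * Real.log s + C ≤ b * s := by
    filter_upwards [h1, h2] with s hs1 hs2; linarith
  obtain ⟨s0, hs0⟩ := (eventually_atTop).mp h3
  exact ⟨max s0 1, le_max_right _ _, fun s hs => hs0 s (le_trans (le_max_left _ _) hs)⟩

set_option maxHeartbeats 1000000 in
/-- The purely scalar core of the argument. -/
lemma core_all (p α : ℝ) (hp : 1 ≤ p) (hα : 0 < α) :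
    ∃ c : ℝ, 0 < c ∧ ∀ I N1 γ : ℝ, 0 < N1 → 0 < I → N1 ≤ I ^ (1/p) → I ^ (1/p) ≤ γ →
      (1 < p →
        Real.log (Real.exp 1 + ((I / (2*N1)) ^ (1/(p-1)) / γ) ^ p) ^ α * (I/2) ≤ γ ^ p) →
      (p = 1 → I = N1) →
      c * I ^ (1/p) * (1 + Real.log (I ^ (1/p) / N1) ^ (α/p)) ≤ γ := by
  rcases eq_or_lt_of_le hp with hp1 | hp1
  · -- p = 1
    refine ⟨1, one_pos, ?_⟩
    intro I N1 γ hN1 hI hN1le hγ _ hI1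
    have hIN : I = N1 := hI1 hp1.symm
    rw [← hp1, hIN] at hγ ⊢
    norm_num at hγ ⊢
    rw [Real.zero_rpow (ne_of_gt hα)]
    simpa using hγ
  -- p > 1
  have hp0 : (0:ℝ) < p := lt_trans one_pos hp1
  have hpm1 : (0:ℝ) < p - 1 := by linarith
  set Kp : ℝ := (2:ℝ) ^ (1 - 1/(p-1)) with hKp_def
  have hKp : 0 < Kp := Real.rpow_pos_of_pos two_pos _
  obtain ⟨s0, hs01, hs0⟩ := eventually_aux (α/p) (Real.log 2 - Real.log Kp)
    (b := 1/(2*(p-1))) (by positivity)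
  set c1 : ℝ := p / (2*(p-1)) with hc1_def
  have hc1 : 0 < c1 := by positivity
  set c2 : ℝ := c1 ^ (α/p) / 2 ^ (1/p) with hc2_def
  have hc2 : 0 < c2 := by positivity
  set L1 : ℝ := s0 ^ (α/p) with hL1_def
  have hL1 : 0 ≤ L1 := Real.rpow_nonneg (by linarith) _
  refine ⟨min (1/2) (min (1/(1+L1)) (min 1 c2 / 2)), by positivity, ?_⟩
  set c : ℝ := min (1/2) (min (1/(1+L1)) (min 1 c2 / 2)) with hc_def
  have hc : 0 < c := by positivity
  intro I N1 γ hN1 hI hN1le hγ hmain' _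
  have hmain := hmain' hp1
  set Np : ℝ := I ^ (1/p) with hNp_def
  have hNp : 0 < Np := Real.rpow_pos_of_pos hI _
  have hγ0 : 0 < γ := lt_of_lt_of_le hNp hγ
  have hNpp : Np ^ p = I := by
    rw [hNp_def, one_div, Real.rpow_inv_rpow hI.le (ne_of_gt hp0)]
  set R : ℝ := Np / N1 with hR_def
  have hR1 : 1 ≤ R := (one_le_div hN1).2 hN1le
  have hR0 : 0 < R := lt_of_lt_of_le one_pos hR1
  set s : ℝ := Real.log R with hs_def
  have hs_nonneg : 0 ≤ s := Real.log_nonneg hR1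
  set L : ℝ := s ^ (α/p) with hL_def
  have hL0 : 0 ≤ L := Real.rpow_nonneg hs_nonneg _
  show c * Np * (1 + L) ≤ γ
  by_cases hA : Np * (1+L) / 2 ≤ γ
  · have hc12 : c ≤ 1/2 := min_le_left _ _
    calc c * Np * (1+L) = c * (Np * (1+L)) := by ring
    _ ≤ 1/2 * (Np * (1+L)) := mul_le_mul_of_nonneg_right hc12
          (mul_nonneg hNp.le (by linarith : (0:ℝ) ≤ 1 + L))
    _ = Np * (1+L) / 2 := by ring
    _ ≤ γ := hA
  · push_neg at hA
    by_cases hs : s < s0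
    · have hLL1 : L ≤ L1 := Real.rpow_le_rpow hs_nonneg hs.le (by positivity)
      have hcL : c ≤ 1/(1+L1) := le_trans (min_le_right _ _) (min_le_left _ _)
      have h2 : (0:ℝ) < 1 + L1 := by linarith
      have h1 : c * (1+L1) ≤ 1 := by
        calc c * (1+L1) ≤ (1/(1+L1)) * (1+L1) := mul_le_mul_of_nonneg_right hcL h2.le
        _ = 1 := by field_simp
      calc c * Np * (1+L) = c * (1+L) * Np := by ring
      _ ≤ c * (1+L1) * Np := mul_le_mul_of_nonneg_right
            (mul_le_mul_of_nonneg_left (by linarith) hc.le) hNp.le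
      _ ≤ 1 * Np := mul_le_mul_of_nonneg_right h1 hNp.le
      _ = Np := one_mul _
      _ ≤ γ := hγ
    · push_neg at hs
      have hs_pos : 0 < s := lt_of_lt_of_le (by linarith) hs
      set lam : ℝ := (I / (2*N1)) ^ (1/(p-1)) with hlam_def
      have hfrac : 0 < I/(2*N1) := by positivity
      have hlam_pos : 0 < lam := Real.rpow_pos_of_pos hfrac _
      have hlam_eq : lam = Np * (R/2) ^ (1/(p-1)) := by
        have h1 : I/(2*N1) = Np^(p-1) * (R/2) := by
          have h2 : Np ^ p = Np ^ (p-1) * Np := by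
            nth_rewrite 1 [show p = (p-1)+1 by ring]
            exact Real.rpow_add_one (ne_of_gt hNp) _
          rw [← hNpp, h2, hR_def]
          field_simp
        have hle : (0:ℝ) ≤ Np^(p-1) := Real.rpow_nonneg hNp.le _
        rw [hlam_def, h1, Real.mul_rpow hle (by positivity),
          ← Real.rpow_mul hNp.le, mul_one_div, div_self (ne_of_gt hpm1), Real.rpow_one]
      have h1L : (0:ℝ) < 1 + L := by linarith
      have hlg : Kp * R ^ (1/(p-1)) / (1 + L) ≤ lam / γ := by
        have e1 : Kp * R ^ (1/(p-1)) / (1+L) = lam / (Np*(1+L)/2) := by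
          rw [hlam_eq, Real.div_rpow hR0.le (by norm_num : (0:ℝ) ≤ 2), hKp_def,
            Real.rpow_sub two_pos, Real.rpow_one]
          have h2p : ((2:ℝ) ^ (1/(p-1))) ≠ 0 := ne_of_gt (Real.rpow_pos_of_pos two_pos _)
          field_simp
        rw [e1]
        exact div_le_div_of_nonneg_left hlam_pos.le hγ0 hA.le
      have hlu0 : 0 < Kp * R ^ (1/(p-1)) / (1 + L) := by
        have := Real.rpow_pos_of_pos hR0 (1/(p-1))
        positivity
      have hlogu : 1/(2*(p-1)) * s ≤ Real.log (lam/γ) := by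
        have h4 : Real.log (Kp * R^(1/(p-1)) / (1+L)) ≤ Real.log (lam/γ) :=
          Real.log_le_log hlu0 hlg
        have h5 : Real.log (Kp * R^(1/(p-1)) / (1+L))
            = Real.log Kp + (1/(p-1)) * s - Real.log (1+L) := by
          rw [Real.log_div (ne_of_gt (by positivity)) (ne_of_gt h1L),
            Real.log_mul (ne_of_gt hKp) (ne_of_gt (Real.rpow_pos_of_pos hR0 _)),
            Real.log_rpow hR0]
        have h7 : (1:ℝ) ≤ s ^ (α/p) := Real.one_le_rpow (by linarith) (by positivity)
        have h6 : Real.log (1+L) ≤ Real.log 2 + (α/p) * Real.log s := by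
          have h8 : (1:ℝ) + L ≤ 2 * s ^ (α/p) := by rw [hL_def]; linarith
          calc Real.log (1+L) ≤ Real.log (2 * s^(α/p)) := Real.log_le_log h1L h8
          _ = Real.log 2 + (α/p) * Real.log s := by
              rw [Real.log_mul two_ne_zero (ne_of_gt (by positivity)), Real.log_rpow hs_pos]
        have h8 := hs0 s hs
        rw [h5] at h4
        have hdd : (1/(p-1)) * s = 2 * (1/(2*(p-1)) * s) := by
          field_simp
        linarith
      have hlogK : c1 * s ≤ Real.log (Real.exp 1 + (lam/γ)^p) := by
        have hu0 : (0:ℝ) < lam/γ := by positivity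
        have hup : (0:ℝ) < (lam/γ)^p := Real.rpow_pos_of_pos hu0 _
        have h9 : Real.log ((lam/γ)^p) ≤ Real.log (Real.exp 1 + (lam/γ)^p) :=
          Real.log_le_log hup (by linarith [Real.exp_pos 1])
        rw [Real.log_rpow hu0] at h9
        have h10 : c1 * s = p * (1/(2*(p-1)) * s) := by rw [hc1_def]; ring
        calc c1 * s = p * (1/(2*(p-1)) * s) := h10
        _ ≤ p * Real.log (lam/γ) := mul_le_mul_of_nonneg_left hlogu hp0.le
        _ ≤ _ := h9
      have hKα : (c1*s)^α * (I/2) ≤ γ^p := by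
        refine le_trans ?_ hmain
        exact mul_le_mul_of_nonneg_right
          (Real.rpow_le_rpow (by positivity) hlogK hα.le) (by positivity)
      have hγ2 : c2 * Np * L ≤ γ := by
        have h10 : ((c1*s)^α * (I/2)) ^ (1/p) ≤ γ := by
          have h11 := Real.rpow_le_rpow (by positivity) hKα
            (by positivity : (0:ℝ) ≤ 1/p)
          rwa [one_div, Real.rpow_rpow_inv hγ0.le (ne_of_gt hp0), ← one_div] at h11
        refine le_trans (le_of_eq ?_) h10
        rw [Real.mul_rpow (by positivity) (by positivity),
          ← Real.rpow_mul (by positivity : (0:ℝ) ≤ c1*s), mul_one_div,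
          Real.mul_rpow hc1.le hs_nonneg, Real.div_rpow hI.le (by norm_num : (0:ℝ) ≤ 2),
          hc2_def, hNp_def, hL_def]
        ring
      have hcc : c ≤ min 1 c2 / 2 := le_trans (min_le_right _ _) (min_le_right _ _)
      have hcc1 : 2*c ≤ 1 := by
        have := min_le_left 1 c2; linarith
      have hcc2 : 2*c ≤ c2 := by
        have := min_le_right 1 c2; linarith
      have ha1 : c * Np ≤ γ/2 := by
        calc c * Np ≤ (1/2) * Np := mul_le_mul_of_nonneg_right (by linarith) hNp.le
        _ ≤ (1/2) * γ := mul_le_mul_of_nonneg_left hγ (by norm_num)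
        _ = γ/2 := by ring
      have ha2 : c * (Np*L) ≤ γ/2 := by
        calc c * (Np*L) ≤ (c2/2) * (Np*L) :=
              mul_le_mul_of_nonneg_right (by linarith) (mul_nonneg hNp.le hL0)
        _ = (c2 * Np * L)/2 := by ring
        _ ≤ γ/2 := by linarith
      calc c * Np * (1+L) = c * Np + c * (Np*L) := by ring
      _ ≤ γ/2 + γ/2 := add_le_add ha1 ha2
      _ = γ := by ring

set_option maxHeartbeats 1000000 in
/-- **The lower bound on the `L_p(log L)^α` Orlicz norm (cf. [CE22, Lemma 17])**:
`‖f‖_{L_p(log L)^α(E)} ≥ c_{p,α} ‖f‖_{L_p(E)} (1 + log^{α/p}(‖f‖_{L_p(E)}/‖f‖_{L_1(E)}))`. -/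
theorem stmt18 (p α : ℝ) (hp : 1 ≤ p) (hα : 0 < α) :
    ∃ c : ℝ, 0 < c ∧
      ∀ (Ω : Type u) (mΩ : MeasurableSpace Ω) (μ : Measure Ω), IsProbabilityMeasure μ →
      ∀ (E : Type v) [NormedAddCommGroup E], ∀ f : Ω → E,
        StronglyMeasurable f → (∃ M, ∀ x, ‖f x‖ ≤ M) → ¬ (f =ᵐ[μ] 0) →
        c * (∫ x, ‖f x‖ ^ p ∂μ) ^ (1 / p) *
            (1 + Real.log ((∫ x, ‖f x‖ ^ p ∂μ) ^ (1 / p) / ∫ x, ‖f x‖ ∂μ) ^ (α / p)) ≤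
          orliczMeas μ p α f := by
  obtain ⟨c, hc, hcore⟩ := core_all p α hp hα
  refine ⟨c, hc, ?_⟩
  intro Ω mΩ μ hμ E _ f hf hbdd hf0
  obtain ⟨M, hM⟩ := hbdd
  have hp0 : (0:ℝ) < p := lt_of_lt_of_le one_pos hp
  set M' : ℝ := max M 1 with hM'_def
  have hM'pos : (0:ℝ) < M' := lt_of_lt_of_le one_pos (le_max_right _ _)
  have hM' : ∀ x, ‖f x‖ ≤ M' := fun x => le_trans (hM x) (le_max_left _ _)
  have hgm : Measurable fun x => ‖f x‖ := hf.norm.measurable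
  have hgsm : AEStronglyMeasurable (fun x => ‖f x‖) μ := hf.norm.aestronglyMeasurable
  -- integrability
  have hint1 : Integrable (fun x => ‖f x‖) μ :=
    ⟨hgsm, HasFiniteIntegral.of_bounded (C := M') (ae_of_all μ fun x => by
      simpa [abs_of_nonneg (norm_nonneg (f x))] using hM' x)⟩
  have hintp : Integrable (fun x => ‖f x‖ ^ p) μ := by
    refine ⟨(hgm.pow_const p).aestronglyMeasurable,
      HasFiniteIntegral.of_bounded (C := M' ^ p) (ae_of_all μ fun x => ?_)⟩
    have h1 : (0:ℝ) ≤ ‖f x‖ ^ p := Real.rpow_nonneg (norm_nonneg _) _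
    rw [Real.norm_of_nonneg h1]
    exact Real.rpow_le_rpow (norm_nonneg _) (hM' x) hp0.le
  have hpsim : ∀ γ : ℝ, Measurable fun x => psi p α (‖f x‖ / γ) := by
    intro γ
    simp only [psi]
    exact ((hgm.div_const γ).pow_const p).mul
      ((measurable_const.add ((hgm.div_const γ).pow_const p)).log.pow_const α)
  have hψint : ∀ γ : ℝ, 0 < γ → Integrable (fun x => psi p α (‖f x‖ / γ)) μ := by
    intro γ hγ
    refine ⟨(hpsim γ).aestronglyMeasurable,
      HasFiniteIntegral.of_bounded (C := psi p α (M'/γ)) (ae_of_all μ fun x => ?_)⟩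
    have h0 : 0 ≤ ‖f x‖ / γ := by positivity
    rw [Real.norm_of_nonneg (psi_nonneg h0)]
    exact psi_mono hp0.le hα.le h0 ((div_le_div_iff_of_pos_right hγ).2 (hM' x))
  -- positivity of norms
  set N1 : ℝ := ∫ x, ‖f x‖ ∂μ with hN1_def
  set I : ℝ := ∫ x, ‖f x‖ ^ p ∂μ with hI_def
  have hN1pos : 0 < N1 := by
    rcases lt_or_eq_of_le (integral_nonneg (f := fun x => ‖f x‖) fun x => norm_nonneg (f x)) with h | h
    · exact h
    · exfalso
      apply hf0
      have h2 := (integral_eq_zero_iff_of_nonneg (fun x => norm_nonneg (f x)) hint1).1 h.symm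
      filter_upwards [h2] with x hx
      simpa using hx
  have hIpos : 0 < I := by
    rcases lt_or_eq_of_le (integral_nonneg (f := fun x => ‖f x‖ ^ p) fun x => Real.rpow_nonneg (norm_nonneg (f x)) p)
      with h | h
    · exact h
    · exfalso
      apply hf0
      have h2 := (integral_eq_zero_iff_of_nonneg
        (fun x => Real.rpow_nonneg (norm_nonneg (f x)) p) hintp).1 h.symm
      filter_upwards [h2] with x hx
      have : ‖f x‖ = 0 := by
        have := hx
        simpa [Real.rpow_eq_zero (norm_nonneg (f x)) (ne_of_gt hp0)] using this
      simpa using this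
  -- Hölder: N1 ≤ I^(1/p)
  have hN1le : N1 ≤ I ^ (1/p) := by
    rcases eq_or_lt_of_le hp with hp1 | hp1
    · have : I = N1 := by
        rw [hI_def, hN1_def]
        congr 1
        ext x
        rw [← hp1, Real.rpow_one]
      rw [this, ← hp1]
      norm_num
    · have hpq := Real.HolderConjugate.conjExponent hp1
      have hmem : MemLp (fun x => ‖f x‖) (ENNReal.ofReal p) μ :=
        (memLp_top_of_bound hgsm M' (ae_of_all μ fun x => by
          simpa [abs_of_nonneg (norm_nonneg (f x))] using hM' x)).mono_exponent le_top
      have hmem1 : MemLp (fun _ : Ω => (1:ℝ)) (ENNReal.ofReal (Real.conjExponent p)) μ :=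
        memLp_const 1
      have h := integral_mul_le_Lp_mul_Lq_of_nonneg hpq
        (ae_of_all μ fun x => norm_nonneg (f x)) (ae_of_all μ fun _ => zero_le_one)
        hmem hmem1
      simpa [measure_univ, Real.one_rpow] using h
  -- the nonempty witness
  have hSne : ∃ γ0, 0 < γ0 ∧ (∫ x, psi p α (‖f x‖ / γ0) ∂μ) ≤ 1 := by
    set t0 : ℝ := (2:ℝ) ^ (-(α/p)) with ht0_def
    have ht0 : 0 < t0 := Real.rpow_pos_of_pos two_pos _
    refine ⟨M'/t0, by positivity, ?_⟩
    have hψt0 : psi p α t0 ≤ 1 := by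
      have ht0p : t0 ^ p = 2 ^ (-α) := by
        rw [ht0_def, ← Real.rpow_mul (by norm_num : (0:ℝ) ≤ 2)]
        congr 1
        field_simp
      have hloc : Real.log (Real.exp 1 + t0 ^ p) ≤ 2 := by
        have he2 : Real.exp 1 + t0 ^ p ≤ Real.exp 1 * Real.exp 1 := by
          have h1 : t0 ^ p ≤ 1 := by
            rw [ht0p]
            exact Real.rpow_le_one_of_one_le_of_nonpos (by norm_num) (by linarith)
          have h2e : (2:ℝ) ≤ Real.exp 1 := by
            have := Real.add_one_le_exp 1
            linarith
          have h3 : 2 * Real.exp 1 ≤ Real.exp 1 * Real.exp 1 :=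
            mul_le_mul_of_nonneg_right h2e (Real.exp_pos 1).le
          linarith
        calc Real.log (Real.exp 1 + t0 ^ p)
            ≤ Real.log (Real.exp 1 * Real.exp 1) :=
              Real.log_le_log (by positivity) he2
        _ = 2 := by rw [Real.log_mul (Real.exp_ne_zero 1) (Real.exp_ne_zero 1), Real.log_exp]; norm_num
      have hlog0 : (0:ℝ) ≤ Real.log (Real.exp 1 + t0 ^ p) :=
        le_trans zero_le_one (one_le_log_aux (Real.rpow_nonneg ht0.le _))
      calc psi p α t0 ≤ t0 ^ p * 2 ^ α := by
            exact mul_le_mul_of_nonneg_left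
              (Real.rpow_le_rpow hlog0 hloc hα.le) (Real.rpow_nonneg ht0.le _)
      _ = 1 := by
          rw [ht0p, ← Real.rpow_add two_pos]
          norm_num
    calc (∫ x, psi p α (‖f x‖ / (M'/t0)) ∂μ) ≤ ∫ _x, (1:ℝ) ∂μ := by
          apply integral_mono (hψint _ (by positivity)) (integrable_const 1)
          intro x
          refine le_trans (le_trans (psi_mono hp0.le hα.le (by positivity) ?_) hψt0) le_rfl
          rw [div_le_iff₀ (by positivity), mul_comm, div_mul_cancel₀ _ (ne_of_gt ht0)]
          exact hM' x
    _ = 1 := by simp [measure_univ]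
  obtain ⟨γ0, hγ00, hγ0le⟩ := hSne
  -- now bound every element of the set from below
  refine le_csInf ⟨γ0, hγ00, hγ0le⟩ ?_
  rintro γ ⟨hγ0, hγint⟩
  -- (a) I ≤ γ^p
  have hIle : I ≤ γ ^ p := by
    have h1 : (∫ x, (‖f x‖/γ) ^ p ∂μ) ≤ 1 := by
      refine le_trans (integral_mono ?_ (hψint γ hγ0) fun x =>
        rpow_le_psi hα.le (by positivity)) hγint
      have : (fun x => (‖f x‖/γ)^p) = fun x => ‖f x‖^p / γ^p := by
        ext x
        rw [Real.div_rpow (norm_nonneg _) hγ0.le]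
      rw [this]
      exact hintp.div_const _
    have h2 : (∫ x, (‖f x‖/γ) ^ p ∂μ) = I / γ^p := by
      rw [hI_def, ← integral_div]
      congr 1
      ext x
      rw [Real.div_rpow (norm_nonneg _) hγ0.le]
    rw [h2, div_le_one (Real.rpow_pos_of_pos hγ0 p)] at h1
    exact h1
  have hNple : I ^ (1/p) ≤ γ := by
    have h1 := Real.rpow_le_rpow (le_of_lt hIpos) hIle (by positivity : (0:ℝ) ≤ 1/p)
    rwa [one_div, Real.rpow_rpow_inv hγ0.le (ne_of_gt hp0), ← one_div] at h1
  -- (b) the main inequality for p > 1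
  refine hcore I N1 γ hN1pos hIpos hN1le hNple ?_ ?_
  · intro hp1
    have hpm1 : (0:ℝ) < p - 1 := by linarith
    set lam : ℝ := (I / (2*N1)) ^ (1/(p-1)) with hlam_def
    have hfrac : 0 < I/(2*N1) := by positivity
    have hlam_pos : 0 < lam := Real.rpow_pos_of_pos hfrac _
    have hlamp : lam ^ (p-1) = I / (2*N1) := by
      rw [hlam_def, one_div, Real.rpow_inv_rpow hfrac.le (ne_of_gt hpm1)]
    set A : Set Ω := {x | lam < ‖f x‖} with hA_def
    have hA_meas : MeasurableSet A := measurableSet_lt measurable_const hgm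
    -- small part
    have hsmall : (∫ x in Aᶜ, ‖f x‖ ^ p ∂μ) ≤ I/2 := by
      have step1 : (∫ x in Aᶜ, ‖f x‖ ^ p ∂μ) ≤ ∫ x in Aᶜ, lam^(p-1) * ‖f x‖ ∂μ := by
        refine setIntegral_mono_on hintp.integrableOn (hint1.const_mul _).integrableOn
          hA_meas.compl fun x hx => ?_
        have hxle : ‖f x‖ ≤ lam := not_lt.mp hx
        have : ‖f x‖ ^ p = ‖f x‖ ^ (p-1) * ‖f x‖ := by
          nth_rewrite 1 [show p = (p-1)+1 by ring]
          rw [Real.rpow_add' (norm_nonneg _) (by linarith), Real.rpow_one]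
        rw [this]
        exact mul_le_mul_of_nonneg_right
          (Real.rpow_le_rpow (norm_nonneg _) hxle hpm1.le) (norm_nonneg _)
      have step2 : (∫ x in Aᶜ, lam^(p-1) * ‖f x‖ ∂μ) = lam^(p-1) * ∫ x in Aᶜ, ‖f x‖ ∂μ :=
        integral_const_mul _ _
      have step3 : (∫ x in Aᶜ, ‖f x‖ ∂μ) ≤ N1 :=
        setIntegral_le_integral hint1 (ae_of_all μ fun x => norm_nonneg _)
      have step4 : lam^(p-1) * ∫ x in Aᶜ, ‖f x‖ ∂μ ≤ lam^(p-1) * N1 :=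
        mul_le_mul_of_nonneg_left step3 (Real.rpow_nonneg hlam_pos.le _)
      have step5 : lam^(p-1) * N1 = I/2 := by
        rw [hlamp]
        field_simp
      linarith
    have hbig : I/2 ≤ ∫ x in A, ‖f x‖ ^ p ∂μ := by
      have := integral_add_compl hA_meas hintp
      rw [← hI_def] at this
      linarith
    -- main bound
    set K : ℝ := Real.log (Real.exp 1 + (lam/γ)^p) ^ α with hK_def
    have hK0 : 0 ≤ K :=
      Real.rpow_nonneg (le_trans zero_le_one (one_le_log_aux
        (Real.rpow_nonneg (by positivity) _))) _
    have hchain : K / γ^p * (I/2) ≤ 1 := by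
      have c1' : K / γ^p * (I/2) ≤ K / γ^p * ∫ x in A, ‖f x‖ ^ p ∂μ :=
        mul_le_mul_of_nonneg_left hbig (by positivity)
      have c2' : K / γ^p * ∫ x in A, ‖f x‖ ^ p ∂μ = ∫ x in A, K / γ^p * ‖f x‖ ^ p ∂μ :=
        (integral_const_mul _ _).symm
      have c3' : (∫ x in A, K / γ^p * ‖f x‖ ^ p ∂μ) ≤ ∫ x in A, psi p α (‖f x‖/γ) ∂μ := by
        refine setIntegral_mono_on ((hintp.const_mul _)).integrableOn
          (hψint γ hγ0).integrableOn hA_meas fun x hx => ?_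
        have hxgt : lam < ‖f x‖ := hx
        have e1 : K / γ^p * ‖f x‖ ^ p = (‖f x‖/γ)^p * K := by
          rw [Real.div_rpow (norm_nonneg _) hγ0.le]
          ring
        rw [e1]
        simp only [psi]
        refine mul_le_mul_of_nonneg_left ?_ (Real.rpow_nonneg (by positivity) _)
        rw [hK_def]
        have hll : (lam/γ)^p ≤ (‖f x‖/γ)^p :=
          Real.rpow_le_rpow (by positivity)
            ((div_le_div_iff_of_pos_right hγ0).2 hxgt.le) hp0.le
        refine Real.rpow_le_rpow
          (le_trans zero_le_one (one_le_log_aux (Real.rpow_nonneg (by positivity) _)))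
          (Real.log_le_log (lt_of_lt_of_le (Real.exp_pos 1)
            (le_add_of_nonneg_right (Real.rpow_nonneg (by positivity) _))) (by linarith)) hα.le
      have c4' : (∫ x in A, psi p α (‖f x‖/γ) ∂μ) ≤ ∫ x, psi p α (‖f x‖/γ) ∂μ :=
        setIntegral_le_integral (hψint γ hγ0)
          (ae_of_all μ fun x => psi_nonneg (by positivity))
      linarith
    rw [div_mul_eq_mul_div, div_le_one (Real.rpow_pos_of_pos hγ0 _)] at hchain
    exact hchain
  · intro hp1
    rw [hI_def, hN1_def]
    congr 1
    ext x
    rw [hp1, Real.rpow_one]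
end
end
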